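/- Define U(n) = n!/n^n and γ(n) = 2^(n-2)·n²·Γ(n/2)²/(j_{n/2-1})^n, where j_{n/2-1} is the first positive zero of the Bessel function J_{n/2-1}. Assuming the bound j_u < √(u+1)·(√(u+2)+1) for all u > 0, one has U(n) < γ(n) for all integers n ≥ 2. -/

import Mathlib

private lemma key12 (n : ℕ) : 9*((n:ℝ)+4)^(n+2)*((n:ℝ)+1)^2*(n:ℝ)^n ≤ 16*((n:ℝ)+2)^(2*n+4) := by
  have h1 : ((n:ℝ)*((n:ℝ)+4))^n ≤ (((n:ℝ)+2)^2)^n := by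
    apply pow_le_pow_left₀ (by positivity) (by nlinarith)
  have h2 : 9*((n:ℝ)+4)^2*((n:ℝ)+1)^2 ≤ 16*((n:ℝ)+2)^4 := by
    have ha : (0:ℝ) ≤ 3*((n:ℝ)+4)*((n:ℝ)+1) := by positivity
    have hb : 3*((n:ℝ)+4)*((n:ℝ)+1) ≤ 4*((n:ℝ)+2)^2 := by nlinarith [Nat.cast_nonneg (α := ℝ) n]
    nlinarith [mul_self_le_mul_self ha hb]
  calc 9*((n:ℝ)+4)^(n+2)*((n:ℝ)+1)^2*(n:ℝ)^n
      = ((n:ℝ)*((n:ℝ)+4))^n * (9*((n:ℝ)+4)^2*((n:ℝ)+1)^2) := by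
        rw [mul_pow]; ring
    _ ≤ (((n:ℝ)+2)^2)^n * (16*((n:ℝ)+2)^4) :=
        mul_le_mul h1 h2 (by positivity) (by positivity)
    _ = 16*((n:ℝ)+2)^(2*n+4) := by rw [← pow_mul]; ring

private def P12 (n : ℕ) : Prop :=
  16 * 3^n * ((n:ℝ)+2)^n * (Nat.factorial n : ℝ)^2 ≤
    2^(4*n) * (n:ℝ)^(n+4) * Real.Gamma ((n:ℝ)/2)^4

private lemma base2 : P12 2 := by
  simp only [P12]
  rw [show ((2:ℕ):ℝ)/2 = 1 by norm_num, Real.Gamma_one]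
  norm_num [Nat.factorial]

private lemma base3 : P12 3 := by
  simp only [P12]
  have h32 : ((3:ℕ):ℝ)/2 = 1/2 + 1 := by norm_num
  rw [h32, Real.Gamma_add_one (by norm_num), Real.Gamma_one_half_eq]
  have hs : Real.sqrt Real.pi ^ 2 = Real.pi := Real.sq_sqrt Real.pi_nonneg
  have hπ : (3:ℝ) < Real.pi := Real.pi_gt_three
  norm_num [Nat.factorial]
  nlinarith [hs, hπ, Real.sqrt_nonneg Real.pi]

private lemma step12 (n : ℕ) (hn : 2 ≤ n) (ih : P12 n) : P12 (n+2) := by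
  simp only [P12] at ih ⊢
  have hx2 : (2:ℝ) ≤ (n:ℝ) := by exact_mod_cast hn
  have hx0 : (0:ℝ) < (n:ℝ) := by linarith
  have hΓ : 0 < Real.Gamma ((n:ℝ)/2) := Real.Gamma_pos_of_pos (by linarith)
  have hcast : ((n+2:ℕ):ℝ) = (n:ℝ)+2 := by push_cast; ring
  rw [hcast]
  have hfac : ((Nat.factorial (n+2) : ℕ):ℝ) = ((n:ℝ)+2)*((n:ℝ)+1)*(Nat.factorial n : ℝ) := by
    rw [Nat.factorial_succ, Nat.factorial_succ]; push_cast; ring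
  rw [hfac]
  have hG : Real.Gamma (((n:ℝ)+2)/2) = (n:ℝ)/2 * Real.Gamma ((n:ℝ)/2) := by
    rw [show ((n:ℝ)+2)/2 = (n:ℝ)/2 + 1 by ring, Real.Gamma_add_one (by positivity)]
  rw [hG]
  set x : ℝ := (n:ℝ) with hxdef
  set g : ℝ := Real.Gamma (x/2) with hgdef
  refine le_of_mul_le_mul_right ?_ (show (0:ℝ) < x^(n+4) by positivity)
  calc 16 * 3^(n+2) * (x+2+2)^(n+2) * ((x+2)*(x+1)*(Nat.factorial n : ℝ))^2 * x^(n+4)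
      = (9*(x+4)^(n+2)*(x+1)^2*x^n) * (16*3^n*(Nat.factorial n : ℝ)^2*(x+2)^2*x^4) := by
        ring
    _ ≤ (16*(x+2)^(2*n+4)) * (16*3^n*(Nat.factorial n : ℝ)^2*(x+2)^2*x^4) := by
        exact mul_le_mul_of_nonneg_right (key12 n) (by positivity)
    _ = (16*(x+2)^(n+6)*x^4) * (16*3^n*(x+2)^n*(Nat.factorial n : ℝ)^2) := by
        ring
    _ ≤ (16*(x+2)^(n+6)*x^4) * (2^(4*n)*x^(n+4)*g^4) := by
        exact mul_le_mul_of_nonneg_left ih (by positivity)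
    _ = 2^(4*(n+2)) * (x+2)^(n+2+4) * (x/2*g)^4 * x^(n+4) := by
        ring

private lemma main12 : ∀ n : ℕ, 2 ≤ n → P12 n := by
  have H : ∀ k : ℕ, P12 (k+2) ∧ P12 (k+3) := by
    intro k
    induction k with
    | zero => exact ⟨base2, base3⟩
    | succ k ih => exact ⟨ih.2, step12 (k+2) (by omega) ih.1⟩
  intro n hn
  obtain ⟨k, rfl⟩ : ∃ k, n = k + 2 := ⟨n - 2, by omega⟩
  exact (H k).1

theorem stmt_12 (j : ℝ → ℝ) (hjpos : ∀ u ≥ (0:ℝ), 0 < j u)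
    (hj : ∀ u ≥ (0:ℝ), j u < Real.sqrt (u + 1) * (Real.sqrt (u + 2) + 1)) :
    ∀ n : ℕ, 2 ≤ n →
      (Nat.factorial n : ℝ) / (n : ℝ) ^ n <
        (2 : ℝ) ^ ((n : ℝ) - 2) * (n : ℝ) ^ 2 * Real.Gamma ((n : ℝ) / 2) ^ 2 /
          (j ((n : ℝ) / 2 - 1)) ^ n := by
  intro n hn
  have hn0 : n ≠ 0 := by omega
  have hx2 : (2:ℝ) ≤ (n:ℝ) := by exact_mod_cast hn
  have hx0 : (0:ℝ) < (n:ℝ) := by linarith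
  have hΓ : 0 < Real.Gamma ((n:ℝ)/2) := Real.Gamma_pos_of_pos (by linarith)
  have hu : (0:ℝ) ≤ (n:ℝ)/2 - 1 := by linarith
  have hj0 : 0 < j ((n:ℝ)/2 - 1) := hjpos _ hu
  have hjb : j ((n:ℝ)/2-1) < Real.sqrt ((n:ℝ)/2) * (Real.sqrt ((n:ℝ)/2+1)+1) := by
    have h := hj _ hu
    rw [show (n:ℝ)/2-1+1 = (n:ℝ)/2 by ring, show (n:ℝ)/2-1+2 = (n:ℝ)/2+1 by ring] at h
    exact h
  set x : ℝ := (n:ℝ) with hxdef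
  -- square bound on j
  have h1 : j (x/2-1)^2 < 3*(x/2)*(x/2+1) := by
    have hs : Real.sqrt (x/2) ^ 2 = x/2 := Real.sq_sqrt (by linarith)
    have hs1 : Real.sqrt (x/2+1) ^ 2 = x/2+1 := Real.sq_sqrt (by linarith)
    have h2s : Real.sqrt (x/2+1) ≤ x/2 + 1/2 := by
      rw [show x/2+1/2 = Real.sqrt ((x/2+1/2)^2) from (Real.sqrt_sq (by linarith)).symm]
      exact Real.sqrt_le_sqrt (by nlinarith)
    have hb : (Real.sqrt (x/2) * (Real.sqrt (x/2+1)+1))^2 ≤ 3*(x/2)*(x/2+1) := by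
      nlinarith [Real.sqrt_nonneg (x/2), Real.sqrt_nonneg (x/2+1)]
    calc j (x/2-1)^2 < (Real.sqrt (x/2) * (Real.sqrt (x/2+1)+1))^2 :=
          pow_lt_pow_left₀ hjb hj0.le two_ne_zero
      _ ≤ 3*(x/2)*(x/2+1) := hb
  have h2 : j (x/2-1)^(2*n) < (3*(x/2)*(x/2+1))^n := by
    have := pow_lt_pow_left₀ h1 (sq_nonneg _) hn0
    rwa [← pow_mul] at this
  -- main algebraic bound
  have hmain := main12 n hn
  simp only [P12] at hmain
  rw [div_lt_div_iff₀ (by positivity) (pow_pos hj0 n)]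
  -- rewrite the rpow as a natural power
  have hrp : (2:ℝ) ^ (x - 2) = 2 ^ (n-2 : ℕ) := by
    rw [show x - 2 = ((n-2:ℕ):ℝ) by rw [Nat.cast_sub hn]; norm_num; exact hxdef, Real.rpow_natCast]
  rw [hrp]
  have hpow2 : (2:ℝ)^(n-2:ℕ) * 4 = 2^n := by
    rw [show (4:ℝ) = 2^2 by norm_num, ← pow_add, Nat.sub_add_cancel hn]
  have h2sub : (2:ℝ)^(n-2:ℕ) = 2^n / 4 := by
    field_simp [← hpow2]
    exact hpow2
  refine lt_of_pow_lt_pow_left₀ 2 (by positivity) ?_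
  set g : ℝ := Real.Gamma (x/2) with hgdef
  have h4n : (4:ℝ)^n = 2^n * 2^n := by rw [← mul_pow]; norm_num
  have h16n : (2:ℝ)^(4*n) = (2^n)^4 := by rw [show 4*n = n*4 by ring, pow_mul]
  have hfinal : (Nat.factorial n : ℝ)^2 * (3*(x/2)*(x/2+1))^n ≤
      (2^(n-2:ℕ) * x^2 * g^2 * x^n)^2 := by
    refine le_of_mul_le_mul_right ?_ (show (0:ℝ) < 4^n * x^n * 16 by positivity)
    have e1 : (3*(x/2)*(x/2+1))^n * 4^n = 3^n * x^n * (x+2)^n := by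
      rw [← mul_pow, ← mul_pow, ← mul_pow]
      congr 1
      ring
    calc (Nat.factorial n : ℝ)^2 * (3*(x/2)*(x/2+1))^n * (4^n * x^n * 16)
        = (16 * 3^n * (x+2)^n * (Nat.factorial n : ℝ)^2) * (x^n * x^n) := by
          linear_combination ((Nat.factorial n : ℝ)^2 * x^n * 16) * e1
      _ ≤ (2^(4*n) * x^(n+4) * g^4) * (x^n * x^n) := by
          exact mul_le_mul_of_nonneg_right hmain (by positivity)
      _ = (2^(n-2:ℕ) * x^2 * g^2 * x^n)^2 * (4^n * x^n * 16) := by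
          rw [h2sub, h4n, h16n]; ring
  calc ((Nat.factorial n : ℝ) * j (x/2-1)^n)^2
      = (Nat.factorial n : ℝ)^2 * j (x/2-1)^(2*n) := by
        rw [mul_pow, ← pow_mul]; ring_nf
    _ < (Nat.factorial n : ℝ)^2 * (3*(x/2)*(x/2+1))^n := by
        exact mul_lt_mul_of_pos_left h2 (by positivity)
    _ ≤ (2^(n-2:ℕ) * x^2 * g^2 * x^n)^2 := hfinal
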